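/- Let Δ be a set of seven triangles in F satisfying the Fano axioms. Then there exists a unique oriented map α such that Δ = {Δ_P : P ∈ F}, where Δ_P = {Q ∈ F : Q ≠ P and α_P(Q) = 1}. -/

import Mathlib

open Finset

/-- The ambient `𝔽₂`-vector space (the Fano cube); the Fano plane `F` is its set of
nonzero vectors. -/
abbrev V : Type := Fin 3 → ZMod 2

/-- A multiplication factor: a sign `ε P Q ∈ {−1,1}` for each ordered pair `(P,Q)` of
distinct points of the Fano plane with `ε Q P = −ε P Q`, normalised to `0` outside its
domain of definition. -/
def IsMulFactor (ε : V → V → ℤ) : Prop :=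
  (∀ P Q : V, P ≠ 0 → Q ≠ 0 → P ≠ Q → (ε P Q = 1 ∨ ε P Q = -1) ∧ ε Q P = -ε P Q) ∧
  (∀ P Q : V, P = 0 ∨ Q = 0 ∨ P = Q → ε P Q = 0)

/-- A norm on the Fano plane: a map to `{−1,1}` multiplicative on pairs of distinct points. -/
def IsNorm (N : V → ℤ) : Prop :=
  (∀ P : V, P ≠ 0 → N P = 1 ∨ N P = -1) ∧
  (∀ P Q : V, P ≠ 0 → Q ≠ 0 → P ≠ Q → N (P + Q) = N P * N Q)

/-- A line of the Fano plane: a 3-element set `{P,Q,R}` of nonzero vectors with `P+Q+R=0`. -/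
def IsLine (L : Set V) : Prop :=
  ∃ P Q R : V, P ≠ 0 ∧ Q ≠ 0 ∧ R ≠ 0 ∧ P ≠ Q ∧ P ≠ R ∧ Q ≠ R ∧
    P + Q + R = 0 ∧ L = {P, Q, R}

/-- A triangle: a 3-element subset of the Fano plane which is not a line. -/
def IsTriangle (T : Set V) : Prop :=
  ∃ P Q R : V, P ≠ 0 ∧ Q ≠ 0 ∧ R ≠ 0 ∧ P ≠ Q ∧ P ≠ R ∧ Q ≠ R ∧
    P + Q + R ≠ 0 ∧ T = {P, Q, R}

/-- A quadrilateral: a 4-element subset of the Fano plane containing no line. -/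
def IsQuad (S : Set V) : Prop :=
  (∃ P Q R T : V, P ≠ 0 ∧ Q ≠ 0 ∧ R ≠ 0 ∧ T ≠ 0 ∧
    P ≠ Q ∧ P ≠ R ∧ P ≠ T ∧ Q ≠ R ∧ Q ≠ T ∧ R ≠ T ∧ S = {P, Q, R, T}) ∧
  (∀ L : Set V, IsLine L → ¬ L ⊆ S)

/-- The future of a point `P`: the points `Q` of the Fano plane with `ε P Q = 1`. -/
def Future (ε : V → V → ℤ) (P : V) : Set V := {Q : V | Q ≠ 0 ∧ Q ≠ P ∧ ε P Q = 1}

/-- The past of a point `P`: the points `Q` of the Fano plane with `ε P Q = −1`. -/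
def Past (ε : V → V → ℤ) (P : V) : Set V := {Q : V | Q ≠ 0 ∧ Q ≠ P ∧ ε P Q = -1}

/-- The composition conditions (C1) and (C2) on a multiplication factor. -/
def CompCond (ε : V → V → ℤ) : Prop :=
  (∀ P Q R : V, P ≠ 0 → Q ≠ 0 → R ≠ 0 → P ≠ Q → P ≠ R → Q ≠ R → P + Q + R = 0 →
    ε P Q * ε Q R = 1) ∧
  (∀ P Q R S : V, P ≠ 0 → Q ≠ 0 → R ≠ 0 → S ≠ 0 →
    P ≠ Q → P ≠ R → P ≠ S → Q ≠ R → Q ≠ S → R ≠ S → IsQuad {P, Q, R, S} →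
    ε P Q * ε Q R * ε R S * ε S P = -1)

/-- An oriented triangle `{P,Q,R}`: one with `ε P Q = ε Q R = ε R P`. -/
def OrientedTri (ε : V → V → ℤ) (T : Set V) : Prop :=
  ∃ P Q R : V, T = {P, Q, R} ∧ P ≠ Q ∧ P ≠ R ∧ Q ≠ R ∧
    ε P Q = ε Q R ∧ ε Q R = ε R P

/-- `P` is the distinguished point of the quadrilateral `S`: the point of `S` whose
complement in `S` is the oriented triangle of `S`. -/
def IsDistPt (ε : V → V → ℤ) (S : Set V) (P : V) : Prop :=
  P ∈ S ∧ IsTriangle (S \ {P}) ∧ OrientedTri ε (S \ {P})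

/-- A family of subsets of the Fano plane satisfies the Fano axioms if two distinct points
lie in exactly one member and two distinct members meet in exactly one point. -/
def FanoFamily (Δ : Set (Set V)) : Prop :=
  (∀ P Q : V, P ≠ 0 → Q ≠ 0 → P ≠ Q → ∃! T, T ∈ Δ ∧ P ∈ T ∧ Q ∈ T) ∧
  (∀ T₁ T₂ : Set V, T₁ ∈ Δ → T₂ ∈ Δ → T₁ ≠ T₂ → ∃! X : V, X ∈ T₁ ∩ T₂)

/-- An `n`-oriented map: `α_P(P) + n(P) = 1` on the Fano plane and
`α_P(Q) + α_Q(P) = 1` for distinct points; normalised by `α 0 = 0`. -/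
def IsNOrientedMap (n : V →ₗ[ZMod 2] ZMod 2) (α : V → V →ₗ[ZMod 2] ZMod 2) : Prop :=
  (∀ P : V, P ≠ 0 → α P P + n P = 1) ∧
  (∀ P Q : V, P ≠ 0 → Q ≠ 0 → P ≠ Q → α P Q + α Q P = 1) ∧
  α 0 = 0

/-- An oriented map is a `0`-oriented map. -/
def IsOrientedMap (α : V → V →ₗ[ZMod 2] ZMod 2) : Prop := IsNOrientedMap 0 α

/-- The exponential `e : ZMod 2 → {−1,1}`, `e^0 = 1`, `e^1 = −1`. -/
def eSign (x : ZMod 2) : ℤ := if x = 0 then 1 else -1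

/-- The multiplication factor `e^α` associated to an (`n`-)oriented map `α`. -/
def expMap (α : V → V →ₗ[ZMod 2] ZMod 2) : V → V → ℤ :=
  fun P Q => if P ≠ 0 ∧ Q ≠ 0 ∧ P ≠ Q then eSign (α P Q) else 0

/-- The set `Δ_P = {Q ∈ F : Q ≠ P, α_P(Q) = 1}` associated to an oriented map. -/
def DeltaSet (α : V → V →ₗ[ZMod 2] ZMod 2) (P : V) : Set V :=
  {Q : V | Q ≠ 0 ∧ Q ≠ P ∧ α P Q = 1}

/-- The map `α ↦ α′`, `α′_P = α_P + n(P)·n`. -/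
def nTransform (n : V →ₗ[ZMod 2] ZMod 2) (α : V → V →ₗ[ZMod 2] ZMod 2) :
    V → V →ₗ[ZMod 2] ZMod 2 :=
  fun P => α P + n P • n

/-- The norm `e^{n}` on the Fano plane associated to a linear form `n`. -/
def NormOf (n : V →ₗ[ZMod 2] ZMod 2) : V → ℤ := fun P => eSign (n P)

/-- Structure constants of the octonion-type multiplication on `O_F` determined by a norm `N`
and a multiplication factor `ε`: `e_0` is a two-sided unit, `e_P ⬝ e_P = −N(P) e_0` and
`e_P ⬝ e_Q = ε_{PQ} e_{P+Q}` for distinct points `P`, `Q` of the Fano plane. -/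
def structC (𝔽 : Type*) [Field 𝔽] (N : V → ℤ) (ε : V → V → ℤ) (P Q : V) : 𝔽 :=
  if P = 0 ∨ Q = 0 then 1
  else if P = Q then -(N P : 𝔽)
  else (ε P Q : 𝔽)

/-- The bilinear multiplication on `O_F = (V → 𝔽)` with the above structure constants
(in `V` we have `X = Y + Z ↔ Z = X + Y`). -/
def octMul (𝔽 : Type*) [Field 𝔽] (N : V → ℤ) (ε : V → V → ℤ) (Z W : V → 𝔽) : V → 𝔽 :=
  fun X => ∑ Y : V, structC 𝔽 N ε Y (X + Y) * Z Y * W (X + Y)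

/-- The quadratic form `N_O` on `O_F`. -/
def octNorm (𝔽 : Type*) [Field 𝔽] (N : V → ℤ) (Z : V → 𝔽) : 𝔽 :=
  ∑ X : V, (if X = 0 then 1 else (N X : 𝔽)) * Z X ^ 2

/-- `(O_F, N, ε)` is a composition algebra: `N_O(Z ⬝ W) = N_O(Z) N_O(W)`. -/
def IsCompAlg (𝔽 : Type*) [Field 𝔽] (N : V → ℤ) (ε : V → V → ℤ) : Prop :=
  ∀ Z W : V → 𝔽, octNorm 𝔽 N (octMul 𝔽 N ε Z W) = octNorm 𝔽 N Z * octNorm 𝔽 N W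

set_option synthInstance.maxSize 2000
set_option maxHeartbeats 4000000

def fdot (w x : V) : ZMod 2 := w 0 * x 0 + w 1 * x 1 + w 2 * x 2

def FTri (a b c : V) : Prop :=
  a ≠ 0 ∧ b ≠ 0 ∧ c ≠ 0 ∧ a ≠ b ∧ a ≠ c ∧ b ≠ c ∧ a + b + c ≠ 0

instance (a b c : V) : Decidable (FTri a b c) := by unfold FTri; infer_instance

lemma fvadd_self : ∀ x : V, x + x = 0 := by decide

lemma fenumE : ∀ a b c q : V, FTri a b c → q = 0 ∨ q = a ∨ q = b ∨ q = c ∨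
    q = a + b ∨ q = a + c ∨ q = b + c ∨ q = a + b + c := by decide

lemma fD7 : ∀ a b c : V, FTri a b c → a + b + c ≠ a ∧ a + b + c ≠ b ∧ a + b + c ≠ c := by decide

lemma fD5 : ∀ a b c : V, FTri a b c →
    ∃ w : V, fdot w a = 1 ∧ fdot w b = 1 ∧ fdot w c = 1 := by decide

lemma fD4 : ∀ u a b c : V, FTri a b c →
    fdot u a = 0 → fdot u b = 0 → fdot u c = 0 → u = 0 := by decide

lemma fD3 : ∀ w P : V, P ≠ 0 → fdot w P = 1 → ∃ a b c : V, FTri a b c ∧ a + b + c = P ∧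
    ∀ q : V, (q ≠ 0 ∧ q ≠ P ∧ fdot w q = 1) ↔ (q = a ∨ q = b ∨ q = c) := by decide

lemma fD1a : ∀ X b c d : V, FTri X b c → d ≠ 0 → d ≠ X → d ≠ b → d ≠ c →
    d + (b + c) ≠ X → d + (b + c) ≠ 0 → (d = X + b ∨ d = X + c) := by decide

lemma fD1b : ∀ X b c x : V, FTri X b c → x ≠ 0 → x ≠ X → x ≠ b + c →
    (x = b ∨ x = c ∨ x = X + b ∨ x = X + c ∨ x = X + b + c) := by decide

lemma fdot_add_left (w w' x : V) : fdot (w + w') x = fdot w x + fdot w' x := by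
  simp only [fdot, Pi.add_apply]; ring

lemma fdot_add_right (w x y : V) : fdot w (x + y) = fdot w x + fdot w y := by
  simp only [fdot, Pi.add_apply]; ring

lemma faddV {x y z : V} (h : x + y = z) : y = x + z := by
  rw [← h, ← add_assoc, fvadd_self, zero_add]

def fLin (w : V) : V →ₗ[ZMod 2] ZMod 2 :=
  w 0 • LinearMap.proj 0 + w 1 • LinearMap.proj 1 + w 2 • LinearMap.proj 2

lemma fLin_apply (w x : V) : fLin w x = fdot w x := by
  simp only [fLin, fdot, LinearMap.add_apply, LinearMap.smul_apply, LinearMap.proj_apply,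
    smul_eq_mul]

lemma fLin_surj (f : V →ₗ[ZMod 2] ZMod 2) : ∃ w : V, f = fLin w := by
  refine ⟨fun i => f (Pi.single i 1), ?_⟩
  apply LinearMap.ext; intro x
  have hx : x = x 0 • (Pi.single 0 1 : V) + x 1 • (Pi.single 1 1 : V)
      + x 2 • (Pi.single 2 1 : V) := by
    funext i
    fin_cases i <;>
      simp [Pi.single_apply, Pi.add_apply, Pi.smul_apply, smul_eq_mul]
  rw [fLin_apply]
  conv_lhs => rw [hx]
  rw [map_add, map_add, map_smul, map_smul, map_smul]
  simp only [smul_eq_mul, fdot]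
  ring

noncomputable def fssum (T : Set V) : V := ∑ x ∈ (Set.toFinite T).toFinset, x

lemma fssum_tri {a b c : V} (hab : a ≠ b) (hac : a ≠ c) (hbc : b ≠ c) :
    fssum {a, b, c} = a + b + c := by
  have h : (Set.toFinite ({a, b, c} : Set V)).toFinset = ({a, b, c} : Finset V) := by
    ext x; simp [Set.Finite.mem_toFinset]
  rw [fssum, h, Finset.sum_insert (by simp [hab, hac]),
    Finset.sum_insert (by simp [hbc]), Finset.sum_singleton, ← add_assoc]

lemma fpair_rep {a b c X : V} (h : FTri a b c) (hX : X = a ∨ X = b ∨ X = c) :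
    ∃ y z : V, FTri X y z ∧ ({a, b, c} : Set V) = {X, y, z} ∧ X + y + z = a + b + c := by
  obtain ⟨h1, h2, h3, h4, h5, h6, h7⟩ := h
  rcases hX with rfl | rfl | rfl
  · exact ⟨b, c, ⟨h1, h2, h3, h4, h5, h6, h7⟩, rfl, rfl⟩
  · refine ⟨a, c, ⟨h2, h1, h3, Ne.symm h4, h6, h5,
      by rwa [show X + a + c = a + X + c by abel]⟩, ?_, by abel⟩
    ext t; simp only [Set.mem_insert_iff, Set.mem_singleton_iff]; tauto
  · refine ⟨a, b, ⟨h3, h1, h2, Ne.symm h5, Ne.symm h6, h4,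
      by rwa [show X + a + b = a + b + X by abel]⟩, ?_, by abel⟩
    ext t; simp only [Set.mem_insert_iff, Set.mem_singleton_iff]; tauto

lemma fthird_rep {a b c X m : V} (h : FTri a b c) (hX : X = a ∨ X = b ∨ X = c)
    (hm : m = a ∨ m = b ∨ m = c) (hXm : X ≠ m) :
    ∃ x : V, FTri X m x ∧ ({a, b, c} : Set V) = {X, m, x} ∧ X + m + x = a + b + c := by
  obtain ⟨y, z, ht, hset, hsum⟩ := fpair_rep h hX
  have hm' : m = X ∨ m = y ∨ m = z := by
    have hmm : m ∈ ({a, b, c} : Set V) := by rcases hm with rfl | rfl | rfl <;> simp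
    rw [hset] at hmm; simpa using hmm
  obtain ⟨h1, h2, h3, h4, h5, h6, h7⟩ := ht
  rcases hm' with rfl | rfl | rfl
  · exact absurd rfl hXm
  · exact ⟨z, ⟨h1, h2, h3, h4, h5, h6, h7⟩, hset, hsum⟩
  · refine ⟨y, ⟨h1, h3, h2, h5, h4, Ne.symm h6,
      by rwa [show X + m + y = X + y + m by abel]⟩, ?_, by rw [← hsum]; abel⟩
    rw [hset]; ext t; simp only [Set.mem_insert_iff, Set.mem_singleton_iff]; tauto

/-- any set of seven triangles satisfying the Fano axioms is the set of the
`Δ_P` of a unique oriented map. -/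
theorem stmt_9 (Δ : Set (Set V)) (hcard : Δ.ncard = 7)
    (htri : ∀ T ∈ Δ, IsTriangle T) (hfano : FanoFamily Δ) :
    ∃! α : V → V →ₗ[ZMod 2] ZMod 2, IsOrientedMap α ∧
      Δ = {S : Set V | ∃ P : V, P ≠ 0 ∧ S = DeltaSet α P} := by
  classical
  have hfin : Δ.Finite := Set.toFinite Δ
  have hDcard : hfin.toFinset.card = 7 := by
    rw [← Set.ncard_eq_toFinset_card Δ hfin]; exact hcard
  have hDmem : ∀ T, T ∈ hfin.toFinset ↔ T ∈ Δ := fun T => Set.Finite.mem_toFinset hfin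
  -- uniqueness of the member through a pair of points
  have huniq : ∀ (p q : V) (S1 S2 : Set V), S1 ∈ Δ → S2 ∈ Δ → p ≠ 0 → q ≠ 0 → p ≠ q →
      p ∈ S1 → q ∈ S1 → p ∈ S2 → q ∈ S2 → S1 = S2 := by
    intro p q S1 S2 h1 h2 hp hq hpq m1 m2 m3 m4
    obtain ⟨U, -, hU⟩ := hfano.1 p q hp hq hpq
    rw [hU S1 ⟨h1, m1, m2⟩, hU S2 ⟨h2, m3, m4⟩]
  -- Step 1: the sum map is injective on Δ
  have sum_inj : ∀ T1 ∈ Δ, ∀ T2 ∈ Δ, fssum T1 = fssum T2 → T1 = T2 := by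
    intro T1 hT1 T2 hT2 hsumeq
    by_contra hne
    obtain ⟨a1, b1, c1, p1, p2, p3, p4, p5, p6, p7, rfl⟩ := htri T1 hT1
    obtain ⟨a2, b2, c2, q1, q2, q3, q4, q5, q6, q7, rfl⟩ := htri T2 hT2
    have ht1 : FTri a1 b1 c1 := ⟨p1, p2, p3, p4, p5, p6, p7⟩
    have ht2 : FTri a2 b2 c2 := ⟨q1, q2, q3, q4, q5, q6, q7⟩
    obtain ⟨X, hXmem, hXuniq⟩ := hfano.2 _ _ hT1 hT2 hne
    have hcommon : ∀ t, t ∈ ({a1, b1, c1} : Set V) → t ∈ ({a2, b2, c2} : Set V) → t = X :=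
      fun t h1 h2 => hXuniq t ⟨h1, h2⟩
    have hX1 : X = a1 ∨ X = b1 ∨ X = c1 := by simpa using hXmem.1
    have hX2 : X = a2 ∨ X = b2 ∨ X = c2 := by simpa using hXmem.2
    obtain ⟨b, c, htXbc, hset1, hsum1⟩ := fpair_rep ht1 hX1
    obtain ⟨d, e, htXde, hset2, hsum2⟩ := fpair_rep ht2 hX2
    obtain ⟨hX0, hb0, hc0, hXb, hXc, hbc, hsXbc⟩ := htXbc
    obtain ⟨-, hd0, he0, hXd, hXe, hde, hsXde⟩ := htXde
    have hbcde : b + c = d + e := by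
      have h1 : X + b + c = X + d + e := by
        rw [hsum1, hsum2, ← fssum_tri p4 p5 p6, ← fssum_tri q4 q5 q6]
        exact hsumeq
      rw [add_assoc, add_assoc] at h1
      exact add_left_cancel h1
    have hmem1 : ∀ t : V, t = X ∨ t = b ∨ t = c → t ∈ ({a1, b1, c1} : Set V) := by
      intro t ht; rw [hset1]; simpa using ht
    have hmem2 : ∀ t : V, t = X ∨ t = d ∨ t = e → t ∈ ({a2, b2, c2} : Set V) := by
      intro t ht; rw [hset2]; simpa using ht
    have hbd : b ≠ d := fun h =>
      hXb (hcommon b (hmem1 b (Or.inr (Or.inl rfl))) (hmem2 b (Or.inr (Or.inl h)))).symm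
    have hbe : b ≠ e := fun h =>
      hXb (hcommon b (hmem1 b (Or.inr (Or.inl rfl))) (hmem2 b (Or.inr (Or.inr h)))).symm
    have hcd : c ≠ d := fun h =>
      hXc (hcommon c (hmem1 c (Or.inr (Or.inr rfl))) (hmem2 c (Or.inr (Or.inl h)))).symm
    have hce : c ≠ e := fun h =>
      hXc (hcommon c (hmem1 c (Or.inr (Or.inr rfl))) (hmem2 c (Or.inr (Or.inr h)))).symm
    have hm0 : b + c ≠ 0 := by
      intro h
      have : c = b := by simpa using faddV h
      exact hbc this.symm
    have hXm : X ≠ b + c := by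
      intro h
      apply hsXbc
      rw [add_assoc, ← h, fvadd_self]
    obtain ⟨T3, ⟨hT3Δ, hXT3, hmT3⟩, -⟩ := hfano.1 X (b + c) hX0 hm0 hXm
    obtain ⟨u1, u2, u3, r1, r2, r3, r4, r5, r6, r7, rfl⟩ := htri T3 hT3Δ
    have ht3 : FTri u1 u2 u3 := ⟨r1, r2, r3, r4, r5, r6, r7⟩
    obtain ⟨x, htXmx, hset3, hsum3⟩ :=
      fthird_rep ht3 (by simpa using hXT3) (by simpa using hmT3) hXm
    obtain ⟨-, -, hx0, -, hXx, hmx, hsXmx⟩ := htXmx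
    have htriXbc : FTri X b c := ⟨hX0, hb0, hc0, hXb, hXc, hbc, hsXbc⟩
    have alg1 : ∀ x y z : V, (x + z) + (y + z) = x + y := by decide
    have alg1' : ∀ x y z : V, (x + z) + (z + y) = x + y := by decide
    have alg2 : ∀ x y z : V, (x + (y + z)) + (x + y + z) = 0 := by decide
    have he' : e = d + (b + c) := faddV hbcde.symm
    -- identify d, e
    have hd' : d = X + b ∨ d = X + c := by
      apply fD1a X b c d htriXbc hd0 (Ne.symm hXd) (Ne.symm hbd) (Ne.symm hcd)
      · intro h
        exact hXe (by rw [he', h])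
      · intro h
        exact he0 (by rw [he', h])
    have hx_mem : x ∈ ({a2, b2, c2} : Set V) ∨ (x = b ∨ x = c ∨ x = X + b + c) := by
      rcases fD1b X b c x htriXbc hx0 (Ne.symm hXx) (Ne.symm hmx) with h | h | h | h | h
      · exact Or.inr (Or.inl h)
      · exact Or.inr (Or.inr (Or.inl h))
      · rcases hd' with hd | hd
        · exact Or.inl (hmem2 x (Or.inr (Or.inl (by rw [h, ← hd]))))
        · refine Or.inl (hmem2 x (Or.inr (Or.inr ?_)))
          rw [h, he', hd]
          exact (alg1 X b c).symm
      · rcases hd' with hd | hd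
        · refine Or.inl (hmem2 x (Or.inr (Or.inr ?_)))
          rw [h, he', hd]
          exact (alg1' X c b).symm
        · exact Or.inl (hmem2 x (Or.inr (Or.inl (by rw [h, ← hd]))))
      · exact Or.inr (Or.inr (Or.inr h))
    -- now derive the contradiction in each case
    rcases hx_mem with hx | hx | hx | hx
    · -- x ∈ T2, so T3 = T2 via the pair (X, x); then b + c ∈ T2
      have hT3eq : ({u1, u2, u3} : Set V) = {a2, b2, c2} := by
        apply huniq X x _ _ hT3Δ hT2 hX0 hx0 hXx
        · exact hXT3
        · rw [hset3]; simp
        · exact hmem2 X (Or.inl rfl)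
        · exact hx
      have : b + c ∈ ({a2, b2, c2} : Set V) := by rw [← hT3eq]; exact hmT3
      rw [hset2] at this
      simp only [Set.mem_insert_iff, Set.mem_singleton_iff] at this
      rcases this with h | h | h
      · exact hXm h.symm
      · apply he0; rw [he', ← h, fvadd_self]
      · apply hd0
        rw [h] at he'
        have h3 : d + e = 0 + e := by rw [zero_add, ← he']
        exact add_right_cancel h3
    · -- x = b : T3 = T1, then b + c ∈ T1
      have hT3eq : ({u1, u2, u3} : Set V) = {a1, b1, c1} := by
        apply huniq X b _ _ hT3Δ hT1 hX0 hb0 hXb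
        · exact hXT3
        · rw [hset3]; simp [hx]
        · exact hmem1 X (Or.inl rfl)
        · exact hmem1 b (Or.inr (Or.inl rfl))
      have : b + c ∈ ({a1, b1, c1} : Set V) := by rw [← hT3eq]; exact hmT3
      rw [hset1] at this
      simp only [Set.mem_insert_iff, Set.mem_singleton_iff] at this
      rcases this with h | h | h
      · exact hXm h.symm
      · apply hc0; exact add_left_cancel (show b + c = b + 0 by rw [add_zero, h])
      · apply hb0; exact add_right_cancel (show b + c = 0 + c by rw [zero_add, h])
    · -- x = c : same with pair (X, c)
      have hT3eq : ({u1, u2, u3} : Set V) = {a1, b1, c1} := by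
        apply huniq X c _ _ hT3Δ hT1 hX0 hc0 hXc
        · exact hXT3
        · rw [hset3]; simp [hx]
        · exact hmem1 X (Or.inl rfl)
        · exact hmem1 c (Or.inr (Or.inr rfl))
      have : b + c ∈ ({a1, b1, c1} : Set V) := by rw [← hT3eq]; exact hmT3
      rw [hset1] at this
      simp only [Set.mem_insert_iff, Set.mem_singleton_iff] at this
      rcases this with h | h | h
      · exact hXm h.symm
      · apply hc0; exact add_left_cancel (show b + c = b + 0 by rw [add_zero, h])
      · apply hb0; exact add_right_cancel (show b + c = 0 + c by rw [zero_add, h])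
    · -- x = X + b + c : then X + (b+c) + x = 0, contradicting the triangle property
      apply hsXmx
      rw [hx]
      exact alg2 X b c
  -- Step 2: every nonzero point is the sum of a unique member of Δ
  have himg : hfin.toFinset.image fssum = Finset.univ.filter (fun x : V => x ≠ 0) := by
    apply Finset.eq_of_subset_of_card_le
    · intro P hP
      simp only [Finset.mem_image] at hP
      obtain ⟨T, hT, rfl⟩ := hP
      obtain ⟨a, b, c, h1, h2, h3, h4, h5, h6, h7, rfl⟩ := htri T ((hDmem T).1 hT)
      simp only [Finset.mem_filter]
      exact ⟨Finset.mem_univ _, by rw [fssum_tri h4 h5 h6]; exact h7⟩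
    · have hic : (hfin.toFinset.image fssum).card = 7 := by
        rw [Finset.card_image_of_injOn, hDcard]
        intro T1 h1 T2 h2 h
        exact sum_inj T1 ((hDmem _).1 h1) T2 ((hDmem _).1 h2) h
      rw [hic]
      decide
  have hsurj : ∀ P : V, ∃ a b c : V, P ≠ 0 →
      FTri a b c ∧ a + b + c = P ∧ ({a, b, c} : Set V) ∈ Δ := by
    intro P
    by_cases hP : P ≠ 0
    · have hPmem : P ∈ hfin.toFinset.image fssum := by
        rw [himg]; simp [hP]
      obtain ⟨T, hT, hTP⟩ := Finset.mem_image.1 hPmem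
      obtain ⟨a, b, c, h1, h2, h3, h4, h5, h6, h7, rfl⟩ := htri T ((hDmem T).1 hT)
      exact ⟨a, b, c, fun _ => ⟨⟨h1, h2, h3, h4, h5, h6, h7⟩,
        by rw [← hTP, fssum_tri h4 h5 h6], (hDmem _).1 hT⟩⟩
    · exact ⟨0, 0, 0, fun h => absurd h hP⟩
  choose A B C hABC using hsurj
  -- P is never a vertex of its own triangle
  have hnotself : ∀ P : V, P ≠ 0 → P ≠ A P ∧ P ≠ B P ∧ P ≠ C P := by
    intro P hP
    obtain ⟨ht, hs, -⟩ := hABC P hP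
    have h7 := fD7 _ _ _ ht
    rw [hs] at h7
    exact h7
  -- Step 3: "not both" directions
  have notboth : ∀ P Q : V, P ≠ 0 → Q ≠ 0 →
      (Q = A P ∨ Q = B P ∨ Q = C P) → (P = A Q ∨ P = B Q ∨ P = C Q) → False := by
    intro P Q hP hQ hQP hPQ
    obtain ⟨htP, hsP, hmP⟩ := hABC P hP
    obtain ⟨htQ, hsQ, hmQ⟩ := hABC Q hQ
    have hPQne : P ≠ Q := by
      intro h
      rcases hQP with hh | hh | hh
      · exact (hnotself P hP).1 (h.trans hh)
      · exact (hnotself P hP).2.1 (h.trans hh)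
      · exact (hnotself P hP).2.2 (h.trans hh)
    obtain ⟨u, v, htuv, hset1, hsum1⟩ := fpair_rep htP hQP
    obtain ⟨w, x, htwx, hset2, hsum2⟩ := fpair_rep htQ hPQ
    rw [hsP] at hsum1
    rw [hsQ] at hsum2
    obtain ⟨hQ0', hu0, hv0, hQu, hQv, huv, hsQuv⟩ := htuv
    obtain ⟨hP0', hw0, hx0, hPw, hPx, hwx, hsPwx⟩ := htwx
    -- sums : Q + u + v = P, P + w + x = Q
    have sol : ∀ y s t r : V, s + t + y = r → y = s + t + r := by decide
    have hvv : v = Q + u + P := sol v Q u P hsum1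
    have huu : u = Q + v + P := sol u Q v P (by rw [← hsum1]; abel)
    have hxx : x = P + w + Q := sol x P w Q hsum2
    have hww : w = P + x + Q := sol w P x Q (by rw [← hsum2]; abel)
    have alg3 : ∀ q p : V, q + p + p = q := by decide
    have alg4 : ∀ a b c : V, a + b + c = c + b + a := by decide
    have hPn1 : P ∉ ({Q, u, v} : Set V) := by
      intro hmem
      simp only [Set.mem_insert_iff, Set.mem_singleton_iff] at hmem
      rcases hmem with h | h | h
      · exact hPQne h
      · have hvQ : v = Q := by rw [hvv, ← h]; exact alg3 Q P
        exact hQv hvQ.symm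
      · have huQ : u = Q := by rw [huu, ← h]; exact alg3 Q P
        exact hQu huQ.symm
    have hQn2 : Q ∉ ({P, w, x} : Set V) := by
      intro hmem
      simp only [Set.mem_insert_iff, Set.mem_singleton_iff] at hmem
      rcases hmem with h | h | h
      · exact hPQne h.symm
      · have hxP : x = P := by rw [hxx, ← h]; exact alg3 P Q
        exact hPx hxP.symm
      · have hwP : w = P := by rw [hww, ← h]; exact alg3 P Q
        exact hPw hwP.symm
    have hS1Δ : ({Q, u, v} : Set V) ∈ Δ := by rw [← hset1]; exact hmP
    have hS2Δ : ({P, w, x} : Set V) ∈ Δ := by rw [← hset2]; exact hmQ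
    have hS12ne : ({Q, u, v} : Set V) ≠ ({P, w, x} : Set V) := by
      intro heq
      exact hPn1 (heq ▸ (by simp : P ∈ ({P, w, x} : Set V)))
    obtain ⟨z, hzmem, hzuniq⟩ := hfano.2 _ _ hS1Δ hS2Δ hS12ne
    have hcom : ∀ t : V, t ∈ ({Q, u, v} : Set V) → t ∈ ({P, w, x} : Set V) → t = z :=
      fun t h1 h2 => hzuniq t ⟨h1, h2⟩
    have hz1 : z = Q ∨ z = u ∨ z = v := by simpa using hzmem.1
    have hz2 : z = P ∨ z = w ∨ z = x := by simpa using hzmem.2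
    have hzQ : z ≠ Q := by
      intro h; apply hQn2; rw [← h]; exact hzmem.2
    have hzP : z ≠ P := by
      intro h; apply hPn1; rw [← h]; exact hzmem.1
    rcases hz1 with h1 | h1 | h1
    · exact hzQ h1
    · rcases hz2 with h2 | h2 | h2
      · exact hzP h2
      · -- z = u, z = w
        have huw : u = w := h1.symm.trans h2
        have hvx : v = x := by rw [hvv, hxx, ← huw]; exact alg4 Q u P
        have hvz : v = z := hcom v (by simp) (by rw [hvx]; simp)
        exact huv (hvz.trans h1).symm
      · -- z = u, z = x
        have hux : u = x := h1.symm.trans h2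
        have hvw : v = w := by rw [hvv, hww, ← hux]; exact alg4 Q u P
        have hvz : v = z := hcom v (by simp) (by rw [hvw]; simp)
        exact huv (hvz.trans h1).symm
    · rcases hz2 with h2 | h2 | h2
      · exact hzP h2
      · -- z = v, z = w
        have hvw : v = w := h1.symm.trans h2
        have hux : u = x := by rw [huu, hxx, ← hvw]; exact alg4 Q v P
        have huz : u = z := hcom u (by simp) (by rw [hux]; simp)
        exact huv (huz.trans h1)
      · -- z = v, z = x
        have hvx : v = x := h1.symm.trans h2
        have huw : u = w := by rw [huu, hww, ← hvx]; exact alg4 Q v P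
        have huz : u = z := hcom u (by simp) (by rw [huw]; simp)
        exact huv (huz.trans h1)
  -- Step 4: counting gives "at least one direction"
  have hFnz : (Finset.univ.filter (fun x : V => x ≠ 0)).card = 7 := by decide
  have atleast : ∀ P Q : V, P ≠ 0 → Q ≠ 0 → P ≠ Q →
      (Q = A P ∨ Q = B P ∨ Q = C P) ∨ (P = A Q ∨ P = B Q ∨ P = C Q) := by
    intro P Q hP hQ hPQ
    set Fnz : Finset V := Finset.univ.filter (fun x : V => x ≠ 0) with hFnzdef
    set E : Finset (V × V) :=
      Fnz.biUnion (fun R => {(R, A R), (R, B R), (R, C R)}) with hEdef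
    have hEmem : ∀ p : V × V, p ∈ E ↔ p.1 ≠ 0 ∧ (p.2 = A p.1 ∨ p.2 = B p.1 ∨ p.2 = C p.1) := by
      rintro ⟨P1, Q1⟩
      simp only [hEdef, Finset.mem_biUnion, hFnzdef, Finset.mem_filter, Finset.mem_univ,
        true_and, Finset.mem_insert, Finset.mem_singleton, Prod.mk.injEq]
      constructor
      · rintro ⟨R, hR, hp⟩
        rcases hp with ⟨rfl, rfl⟩ | ⟨rfl, rfl⟩ | ⟨rfl, rfl⟩ <;> exact ⟨hR, by simp⟩
      · rintro ⟨h1, h2⟩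
        exact ⟨P1, h1, by tauto⟩
    have hcard3 : ∀ R ∈ Fnz, ({(R, A R), (R, B R), (R, C R)} : Finset (V × V)).card = 3 := by
      intro R hR
      have hRne : R ≠ 0 := by simpa [hFnzdef] using hR
      obtain ⟨⟨-, -, -, hAB, hAC, hBC, -⟩, -, -⟩ := hABC R hRne
      rw [Finset.card_insert_of_notMem (by simp [Prod.mk.injEq, hAB, hAC]),
          Finset.card_insert_of_notMem (by simp [Prod.mk.injEq, hBC]),
          Finset.card_singleton]
    have hEcard : E.card = 21 := by
      rw [hEdef, Finset.card_biUnion]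
      · rw [Finset.sum_congr rfl hcard3, Finset.sum_const, hFnz]
        rfl
      · intro a ha b hb hab
        rw [Function.onFun_apply, Finset.disjoint_left]
        rintro p hp hq
        simp only [Finset.mem_insert, Finset.mem_singleton] at hp hq
        rcases hp with rfl | rfl | rfl <;>
          simp only [Prod.mk.injEq] at hq <;> tauto
    set E' := E.image Prod.swap with hE'def
    have hE'card : E'.card = 21 := by
      rw [hE'def, Finset.card_image_of_injective _ Prod.swap_injective, hEcard]
    have hswapmem : ∀ p : V × V, p ∈ E' → p.swap ∈ E := by
      intro p hp
      obtain ⟨q, hq, hqp⟩ := Finset.mem_image.1 hp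
      have hq' : q = p.swap := by rw [← hqp, Prod.swap_swap]
      rwa [← hq']
    have hdisj : Disjoint E E' := by
      rw [Finset.disjoint_left]
      intro p hp hp'
      have h1 := (hEmem p).1 hp
      have h2 := (hEmem p.swap).1 (hswapmem p hp')
      exact notboth p.1 p.2 h1.1 h2.1 h1.2 h2.2
    have hEoff : ∀ p : V × V, p ∈ E → p.1 ≠ 0 ∧ p.2 ≠ 0 ∧ p.1 ≠ p.2 := by
      intro p hp
      have h1 := (hEmem p).1 hp
      obtain ⟨ht, hs, -⟩ := hABC p.1 h1.1
      have hn := hnotself p.1 h1.1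
      refine ⟨h1.1, ?_, ?_⟩
      · rcases h1.2 with h | h | h <;> rw [h]
        · exact ht.1
        · exact ht.2.1
        · exact ht.2.2.1
      · rcases h1.2 with h | h | h <;> rw [h]
        · exact hn.1
        · exact hn.2.1
        · exact hn.2.2
    have hsub : E ∪ E' ⊆ Fnz.offDiag := by
      intro p hp
      rcases Finset.mem_union.1 hp with hp | hp
      · obtain ⟨h1, h2, h3⟩ := hEoff p hp
        simp [Finset.mem_offDiag, hFnzdef, h1, h2, h3]
      · obtain ⟨h1, h2, h3⟩ := hEoff p.swap (hswapmem p hp)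
        simp only [Prod.fst_swap, Prod.snd_swap] at h1 h2 h3
        simp [Finset.mem_offDiag, hFnzdef, h1, h2, Ne.symm h3]
    have hEE' : E ∪ E' = Fnz.offDiag := by
      apply Finset.eq_of_subset_of_card_le hsub
      rw [Finset.card_union_of_disjoint hdisj, hEcard, hE'card, Finset.offDiag_card, hFnz]
    have hPQmem : (P, Q) ∈ E ∪ E' := by
      rw [hEE']
      simp [Finset.mem_offDiag, hFnzdef, hP, hQ, hPQ]
    rcases Finset.mem_union.1 hPQmem with h | h
    · exact Or.inl ((hEmem _).1 h).2
    · exact Or.inr ((hEmem _).1 (hswapmem _ h)).2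
  -- Step 5: construct α
  have hWex : ∀ P : V, ∃ w : V, P ≠ 0 →
      fdot w (A P) = 1 ∧ fdot w (B P) = 1 ∧ fdot w (C P) = 1 := by
    intro P
    by_cases hP : P ≠ 0
    · obtain ⟨ht, -, -⟩ := hABC P hP
      obtain ⟨w, hw⟩ := fD5 _ _ _ ht
      exact ⟨w, fun _ => hw⟩
    · exact ⟨0, fun h => absurd h hP⟩
  choose W hW using hWex
  set α : V → V →ₗ[ZMod 2] ZMod 2 := fun P => if P = 0 then 0 else fLin (W P) with hαdef
  have hα0 : α 0 = 0 := by simp [hαdef]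
  have hαP : ∀ P, P ≠ 0 → ∀ x, α P x = fdot (W P) x := by
    intro P hP x
    simp [hαdef, hP, fLin_apply]
  have hdot3 : ∀ u x y z : V, fdot u (x + y + z) = fdot u x + fdot u y + fdot u z := by
    intro u x y z
    rw [fdot_add_right, fdot_add_right]
  have hαPP : ∀ P, P ≠ 0 → α P P = 1 := by
    intro P hP
    obtain ⟨ht, hs, -⟩ := hABC P hP
    obtain ⟨w1, w2, w3⟩ := hW P hP
    rw [hαP P hP]
    have h1 : fdot (W P) (A P + B P + C P) = 1 := by
      rw [hdot3, w1, w2, w3]; decide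
    rwa [hs] at h1
  have hchar : ∀ P, P ≠ 0 → ∀ q, q ≠ 0 → q ≠ P →
      (α P q = 1 ↔ (q = A P ∨ q = B P ∨ q = C P)) := by
    intro P hP q hq0 hqP
    obtain ⟨ht, hs, -⟩ := hABC P hP
    obtain ⟨w1, w2, w3⟩ := hW P hP
    rw [hαP P hP]
    constructor
    · intro hdot
      rcases fenumE (A P) (B P) (C P) q ht with h | h | h | h | h | h | h | h
      · exact absurd h hq0
      · exact Or.inl h
      · exact Or.inr (Or.inl h)
      · exact Or.inr (Or.inr h)
      · rw [h, fdot_add_right, w1, w2] at hdot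
        exact absurd hdot (by decide)
      · rw [h, fdot_add_right, w1, w3] at hdot
        exact absurd hdot (by decide)
      · rw [h, fdot_add_right, w2, w3] at hdot
        exact absurd hdot (by decide)
      · rw [hs] at h
        exact absurd h hqP
    · rintro (rfl | rfl | rfl)
      · exact w1
      · exact w2
      · exact w3
  have hDelta : ∀ P, P ≠ 0 → DeltaSet α P = {A P, B P, C P} := by
    intro P hP
    obtain ⟨ht, hs, -⟩ := hABC P hP
    have hn := hnotself P hP
    ext q
    simp only [DeltaSet, Set.mem_setOf_eq, Set.mem_insert_iff, Set.mem_singleton_iff]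
    constructor
    · rintro ⟨h1, h2, h3⟩
      exact (hchar P hP q h1 h2).1 h3
    · rintro (rfl | rfl | rfl)
      · exact ⟨ht.1, Ne.symm hn.1, (hchar P hP _ ht.1 (Ne.symm hn.1)).2 (Or.inl rfl)⟩
      · exact ⟨ht.2.1, Ne.symm hn.2.1, (hchar P hP _ ht.2.1 (Ne.symm hn.2.1)).2 (Or.inr (Or.inl rfl))⟩
      · exact ⟨ht.2.2.1, Ne.symm hn.2.2, (hchar P hP _ ht.2.2.1 (Ne.symm hn.2.2)).2 (Or.inr (Or.inr rfl))⟩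
  have hfam : Δ = {S : Set V | ∃ P : V, P ≠ 0 ∧ S = DeltaSet α P} := by
    ext T
    constructor
    · intro hT
      obtain ⟨a, b, c, h1, h2, h3, h4, h5, h6, h7, rfl⟩ := htri T hT
      refine ⟨a + b + c, h7, ?_⟩
      obtain ⟨ht, hs, hmem⟩ := hABC (a + b + c) h7
      rw [hDelta _ h7]
      apply sum_inj _ hT _ hmem
      rw [fssum_tri h4 h5 h6, fssum_tri ht.2.2.2.1 ht.2.2.2.2.1 ht.2.2.2.2.2.1, hs]
    · rintro ⟨P, hP, rfl⟩
      rw [hDelta P hP]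
      exact (hABC P hP).2.2
  have horient : IsOrientedMap α := by
    refine ⟨fun P hP => ?_, fun P Q hP hQ hPQ => ?_, hα0⟩
    · rw [hαPP P hP]
      simp
    · have hzm : ∀ t : ZMod 2, t ≠ 1 → t = 0 := by decide
      rcases atleast P Q hP hQ hPQ with h | h
      · have h1 : α P Q = 1 := (hchar P hP Q hQ (Ne.symm hPQ)).2 h
        have h2 : α Q P = 0 := by
          apply hzm
          intro hc
          exact notboth P Q hP hQ h ((hchar Q hQ P hP hPQ).1 hc)
        rw [h1, h2]
        decide
      · have h1 : α Q P = 1 := (hchar Q hQ P hP hPQ).2 h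
        have h2 : α P Q = 0 := by
          apply hzm
          intro hc
          exact notboth P Q hP hQ ((hchar P hP Q hQ (Ne.symm hPQ)).1 hc) h
        rw [h1, h2]
        decide
  refine ⟨α, ⟨horient, hfam⟩, ?_⟩
  rintro β ⟨hβor, hβfam⟩
  funext P
  by_cases hP : P = 0
  · rw [hP, hβor.2.2, hα0]
  · obtain ⟨w, hw⟩ := fLin_surj (β P)
    have hβPP : β P P = 1 := by
      have := hβor.1 P hP
      simpa using this
    have hdotwP : fdot w P = 1 := by
      rw [← fLin_apply, ← hw]
      exact hβPP
    obtain ⟨a, b, c, htabc, hsabc, hiff⟩ := fD3 w P hP hdotwP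
    have hDβ : DeltaSet β P = ({a, b, c} : Set V) := by
      ext q
      simp only [DeltaSet, Set.mem_setOf_eq, Set.mem_insert_iff, Set.mem_singleton_iff]
      rw [hw, fLin_apply]
      exact hiff q
    have hmemΔ : DeltaSet β P ∈ Δ := by
      rw [hβfam]
      exact ⟨P, hP, rfl⟩
    obtain ⟨ht, hs, hmem⟩ := hABC P hP
    have heq : ({a, b, c} : Set V) = {A P, B P, C P} := by
      apply sum_inj _ (hDβ ▸ hmemΔ) _ hmem
      rw [fssum_tri htabc.2.2.2.1 htabc.2.2.2.2.1 htabc.2.2.2.2.2.1,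
        fssum_tri ht.2.2.2.1 ht.2.2.2.2.1 ht.2.2.2.2.2.1, hsabc, hs]
    have hval : ∀ X : V, (X = A P ∨ X = B P ∨ X = C P) → fdot w X = 1 := by
      intro X hX
      have hXmem : X = a ∨ X = b ∨ X = c := by
        have : X ∈ ({a, b, c} : Set V) := by rw [heq]; simpa using hX
        simpa using this
      exact ((hiff X).2 hXmem).2.2
    obtain ⟨w1, w2, w3⟩ := hW P hP
    have hwsum : w + W P = 0 := by
      apply fD4 (w + W P) (A P) (B P) (C P) ht
      · rw [fdot_add_left, hval _ (Or.inl rfl), w1]; decide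
      · rw [fdot_add_left, hval _ (Or.inr (Or.inl rfl)), w2]; decide
      · rw [fdot_add_left, hval _ (Or.inr (Or.inr rfl)), w3]; decide
    have hwW : w = W P := by
      have h0 := faddV hwsum
      rw [add_zero] at h0
      exact h0.symm
    rw [hw, hwW]
    simp [hαdef, hP]
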